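/- Let X = X₁ × ⋯ × X_n with |X_i| ≥ 2, let 1 ≤ k ≤ n, and let A ∈ ℝ^{a×X} be a matrix whose rows span V_k(X). Let Y be a finite set and let c_y ∈ X, y ∈ Y, be points such that the radius-k Hamming balls K(c_y,Λ_k), y ∈ Y, are pairwise disjoint. Then there exists a family of vectors (v_y)_{y∈Y} in ℝ^a such that for every y ∈ Y and every x ∈ K(c_y,Λ_k), ⟨A_x, v_y⟩ > ⟨A_x, v_{y'}⟩ for all y' ∈ Y∖{y}; that is, the slicing induced by (v_y)_{y∈Y} satisfies C_y ⊇ K(c_y,Λ_k) for all y ∈ Y. -/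

import Mathlib

open scoped Classical BigOperators

/-- `V_k(X)`: the span of all functions on `X = ∏ i, X_i` depending on at most `k`
coordinates. -/
noncomputable def Vk (n : ℕ) (q : Fin n → ℕ) (k : ℕ) :
    Submodule ℝ ((∀ i, Fin (q i)) → ℝ) :=
  Submodule.span ℝ
    {f : (∀ i, Fin (q i)) → ℝ | ∃ s : Finset (Fin n), s.card ≤ k ∧
      ∀ x x' : ∀ i, Fin (q i), (∀ i ∈ s, x i = x' i) → f x = f x'}

/-- If the rows of `A` span `V_k(X)` and `K(c_y, Λ_k)`, `y ∈ Y`, are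
pairwise disjoint radius-`k` Hamming balls in `X`, then there is a family of vectors
`(v_y)` such that for each `y` and each `x ∈ K(c_y,Λ_k)` we have
`⟨A_x, v_y⟩ > ⟨A_x, v_{y'}⟩` for all `y' ≠ y`; i.e. the induced slicing satisfies
`C_y ⊇ K(c_y,Λ_k)` for all `y`. -/
theorem slicing_containing_hamming_balls
    (n : ℕ) (q : Fin n → ℕ) (hq : ∀ i, 2 ≤ q i)
    (k : ℕ) (hk1 : 1 ≤ k) (hkn : k ≤ n)
    (a : ℕ) (A : Matrix (Fin a) (∀ i, Fin (q i)) ℝ)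
    (hA : Submodule.span ℝ (Set.range A) = Vk n q k)
    {Y : Type*} [Fintype Y]
    (c : Y → ∀ i, Fin (q i))
    (hdisj : ∀ y y', y ≠ y' →
      ∀ x, ¬(hammingDist x (c y) ≤ k ∧ hammingDist x (c y') ≤ k)) :
    ∃ v : Y → Fin a → ℝ, ∀ y : Y, ∀ x : ∀ i, Fin (q i), hammingDist x (c y) ≤ k →
      ∀ y', y' ≠ y → ∑ i, A i x * v y' i < ∑ i, A i x * v y i := by
  -- the key function: f y x = -(hammingDist x (c y))
  set f : Y → (∀ i, Fin (q i)) → ℝ := fun y x => -(hammingDist x (c y) : ℝ) with hf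
  -- f y ∈ Vk
  have hmem : ∀ y, f y ∈ Vk n q k := by
    intro y
    have hsum : f y = ∑ j : Fin n,
        (fun x : ∀ i, Fin (q i) => -(if x j = c y j then (0:ℝ) else 1)) := by
      funext x
      have : (hammingDist x (c y) : ℝ) =
          ∑ j : Fin n, (if x j = c y j then (0:ℝ) else 1) := by
        rw [hammingDist]
        rw [Finset.card_filter]
        push_cast
        apply Finset.sum_congr rfl
        intro j _
        by_cases h : x j = c y j <;> simp [h]
      simp only [hf, this, Finset.sum_apply, ← Finset.sum_neg_distrib]
    rw [hsum]
    apply Submodule.sum_mem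
    intro j _
    have hgen : (fun x : ∀ i, Fin (q i) => (if x j = c y j then (0:ℝ) else 1)) ∈
        Vk n q k := by
      apply Submodule.subset_span
      refine ⟨{j}, ?_, ?_⟩
      · simpa using hk1
      · intro x x' h
        have := h j (Finset.mem_singleton_self j)
        simp [this]
    have := Submodule.smul_mem (Vk n q k) (-1 : ℝ) hgen
    convert this using 1
    funext x
    by_cases h : x j = c y j <;> simp [h]
  -- extract coefficients
  have hex : ∀ y, ∃ w : Fin a → ℝ, ∑ i, w i • A i = f y := by
    intro y
    have h := hmem y
    rw [← hA] at h
    exact (Submodule.mem_span_range_iff_exists_fun ℝ).mp h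
  choose v hv using hex
  refine ⟨v, ?_⟩
  intro y x hx y' hy'
  have hval : ∀ z, ∑ i, A i x * v z i = f z x := by
    intro z
    have := congrFun (hv z) x
    simpa [Finset.sum_apply, mul_comm] using this
  rw [hval, hval]
  have hfar : k < hammingDist x (c y') := by
    by_contra h
    exact hdisj y' y hy' x ⟨le_of_not_gt h, hx⟩
  simp only [hf, neg_lt_neg_iff]
  exact_mod_cast lt_of_le_of_lt hx hfar
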